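/- Let d ≥ 1 and let ρ be a symmetric non-degenerate probability measure on ℝ^d (ρ(H) < 1 for every affine hyperplane H) with ∫_{ℝ^d} ‖z‖⁴ dρ(z) < ∞, and let Σ be its covariance matrix. Then the function z ↦ exp(−M₄(Σ^{−1/2}z)/12) is integrable with respect to Lebesgue measure on ℝ^d. -/

import Mathlib

open MeasureTheory Filter Matrix Real

noncomputable section

/-- `T_n(x) = ∑ i, x_i ᵗx_i`. -/
def Tmat (d n : ℕ) (x : Fin n → Fin d → ℝ) : Matrix (Fin d) (Fin d) ℝ :=
  ∑ i, Matrix.vecMulVec (x i) (x i)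

/-- `S_n(x) = x_1 + … + x_n`. -/
def Svec (d n : ℕ) (x : Fin n → Fin d → ℝ) : Fin d → ℝ := ∑ i, x i

/-- the Hamiltonian `(1/2)⟨T_n⁻¹ S_n, S_n⟩`. -/
def Hfun (d n : ℕ) (x : Fin n → Fin d → ℝ) : ℝ :=
  (1 / 2) * dotProduct ((Tmat d n x)⁻¹.mulVec (Svec d n x)) (Svec d n x)

/-- normalization constant `Z_n`. -/
def Zconst (d : ℕ) (ρ : Measure (Fin d → ℝ)) (n : ℕ) : ℝ :=
  ∫ x : Fin n → Fin d → ℝ,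
    Set.indicator {x | 0 < (Tmat d n x).det} (fun x => Real.exp (Hfun d n x)) x
    ∂ Measure.pi fun _ => ρ

/-- the Curie-Weiss model of SOC `μ̃_{n,ρ}`. -/
def CW (d : ℕ) (ρ : Measure (Fin d → ℝ)) (n : ℕ) : Measure (Fin n → Fin d → ℝ) :=
  (Measure.pi fun _ => ρ).withDensity fun x =>
    Set.indicator {x | 0 < (Tmat d n x).det}
      (fun x => ENNReal.ofReal (Real.exp (Hfun d n x) / Zconst d ρ n)) x

/-- covariance matrix `Σ = ∫ z ᵗz dρ(z)`. -/
def covM (d : ℕ) (ρ : Measure (Fin d → ℝ)) : Matrix (Fin d) (Fin d) ℝ :=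
  Matrix.of fun i j => ∫ z, z i * z j ∂ρ

/-- `M₄(z) = ∑ (∫ yᵢyⱼyₖyₗ dρ) zᵢzⱼzₖzₗ`. -/
def M4 (d : ℕ) (ρ : Measure (Fin d → ℝ)) (z : Fin d → ℝ) : ℝ :=
  ∑ i : Fin d, ∑ j : Fin d, ∑ k : Fin d, ∑ l : Fin d,
    (∫ y, y i * y j * y k * y l ∂ρ) * (z i * z j * z k * z l)

/-- symmetric measure: invariant under `z ↦ -z`. -/
def SymMeas (d : ℕ) (ρ : Measure (Fin d → ℝ)) : Prop := ρ.map (fun z => -z) = ρ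

/-- condition `(*)` : some Gaussian exponential moment. -/
def CondStar (d : ℕ) (ρ : Measure (Fin d → ℝ)) : Prop :=
  ∃ v₀ > (0:ℝ), Integrable (fun z => Real.exp (v₀ * dotProduct z z)) ρ

/-- the ρ-measure of every vector hyperplane is `< 1/√e`. -/
def HypLt (d : ℕ) (ρ : Measure (Fin d → ℝ)) : Prop :=
  ∀ s : Fin d → ℝ, s ≠ 0 →
    ρ {z | dotProduct s z = 0} < ENNReal.ofReal (1 / Real.sqrt (Real.exp 1))

/-- non-degeneracy: the ρ-measure of every affine hyperplane is `< 1`. -/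
def NonDeg (d : ℕ) (ρ : Measure (Fin d → ℝ)) : Prop :=
  ∀ s : Fin d → ℝ, s ≠ 0 → ∀ c : ℝ, ρ {z | dotProduct s z = c} < 1

-- positive square root of a positive semi-definite matrix (junk value otherwise).
open scoped Classical in
def psqrt (d : ℕ) (M : Matrix (Fin d) (Fin d) ℝ) : Matrix (Fin d) (Fin d) ℝ :=
  if h : M.PosSemidef then
    (h.1.eigenvectorUnitary : Matrix (Fin d) (Fin d) ℝ) *
      Matrix.diagonal (fun i => Real.sqrt (h.1.eigenvalues i)) *
      (star h.1.eigenvectorUnitary : Matrix (Fin d) (Fin d) ℝ)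
  else 0

/-- Euclidean norm on `ℝ^d`. -/
def vnorm (d : ℕ) (v : Fin d → ℝ) : ℝ := Real.sqrt (dotProduct v v)

/-- Frobenius norm on `d × d` matrices. -/
def mnorm (d : ℕ) (M : Matrix (Fin d) (Fin d) ℝ) : ℝ :=
  Real.sqrt (∑ i : Fin d, ∑ j : Fin d, (M i j) ^ 2)

/-- the log-Laplace transform `Λ` of `(Z, Z ᵗZ)`, with values in `(-∞, +∞]`. -/
def Lam (d : ℕ) (ρ : Measure (Fin d → ℝ)) (u : Fin d → ℝ)
    (A : Matrix (Fin d) (Fin d) ℝ) : EReal :=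
  ENNReal.log (∫⁻ z, ENNReal.ofReal
    (Real.exp (dotProduct u z + dotProduct (A.mulVec z) z)) ∂ρ)

/-- the Cramér transform `I` of `(Z, Z ᵗZ)`. -/
def CramerI (d : ℕ) (ρ : Measure (Fin d → ℝ)) (x : Fin d → ℝ)
    (M : Matrix (Fin d) (Fin d) ℝ) : EReal :=
  ⨆ p : (Fin d → ℝ) × {A : Matrix (Fin d) (Fin d) ℝ // A.IsSymm},
    ((dotProduct x p.1 + (M * (p.2 : Matrix (Fin d) (Fin d) ℝ)).trace : ℝ) : EReal)
      - Lam d ρ p.1 p.2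

end


section helpers

open MeasureTheory

variable {d : ℕ} {ρ : Measure (Fin d → ℝ)} [IsProbabilityMeasure ρ]

lemma abs_le_vnorm (y : Fin d → ℝ) (i : Fin d) : |y i| ≤ vnorm d y := by
  have h1 : y i ^ 2 ≤ dotProduct y y := by
    rw [dotProduct]
    have h := Finset.single_le_sum (f := fun j => y j * y j)
      (fun j _ => mul_self_nonneg _) (Finset.mem_univ i)
    rw [sq]
    exact h
  calc |y i| = Real.sqrt ((y i) ^ 2) := (Real.sqrt_sq_eq_abs _).symm
  _ ≤ _ := Real.sqrt_le_sqrt h1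

lemma vnorm_nonneg (y : Fin d → ℝ) : 0 ≤ vnorm d y := Real.sqrt_nonneg _

lemma integrable_quad (h4 : Integrable (fun z => vnorm d z ^ 4) ρ) (i j k l : Fin d) :
    Integrable (fun y => y i * y j * y k * y l) ρ := by
  refine h4.mono ?_ (Filter.Eventually.of_forall fun y => ?_)
  · exact Continuous.aestronglyMeasurable (by fun_prop)
  · have hi := abs_le_vnorm y i
    have hj := abs_le_vnorm y j
    have hk := abs_le_vnorm y k
    have hl := abs_le_vnorm y l
    have hv := vnorm_nonneg y
    have : ‖y i * y j * y k * y l‖ = |y i| * |y j| * |y k| * |y l| := by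
      simp [Real.norm_eq_abs, abs_mul]
    rw [this]
    have h4' : ‖vnorm d y ^ 4‖ = vnorm d y ^ 4 := by
      rw [Real.norm_eq_abs, abs_of_nonneg (by positivity)]
    rw [h4']
    calc |y i| * |y j| * |y k| * |y l| ≤ vnorm d y * vnorm d y * vnorm d y * vnorm d y := by
          gcongr <;> first | exact abs_nonneg _ | assumption
    _ = vnorm d y ^ 4 := by ring

lemma integrable_pair (h4 : Integrable (fun z => vnorm d z ^ 4) ρ) (i j : Fin d) :
    Integrable (fun y => y i * y j) ρ := by
  refine ((integrable_const (1:ℝ)).add h4).mono ?_ (Filter.Eventually.of_forall fun y => ?_)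
  · exact Continuous.aestronglyMeasurable (by fun_prop)
  · have hi := abs_le_vnorm y i
    have hj := abs_le_vnorm y j
    have hv := vnorm_nonneg y
    have h1 : ‖y i * y j‖ = |y i| * |y j| := by simp [Real.norm_eq_abs, abs_mul]
    have hb : |y i| * |y j| ≤ vnorm d y * vnorm d y := by
      gcongr <;> first | exact abs_nonneg _ | assumption
    refine le_trans ?_ (le_abs_self _)
    show ‖y i * y j‖ ≤ (1:ℝ) + vnorm d y ^ 4
    calc ‖y i * y j‖ = |y i| * |y j| := h1
    _ ≤ (1:ℝ) + vnorm d y ^ 4 := by nlinarith [sq_nonneg (vnorm d y ^ 2 - 1), sq_nonneg (vnorm d y)]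

lemma dot_pow_four (w y : Fin d → ℝ) :
    dotProduct y w ^ 4 =
      ∑ i : Fin d, ∑ j : Fin d, ∑ k : Fin d, ∑ l : Fin d,
        (y i * y j * y k * y l) * (w i * w j * w k * w l) := by
  have h : dotProduct y w ^ 4 =
      (∑ i, y i * w i) * ((∑ i, y i * w i) * ((∑ i, y i * w i) * (∑ i, y i * w i))) := by
    rw [dotProduct]; ring
  rw [h]
  simp only [Finset.sum_mul, Finset.mul_sum]
  refine Finset.sum_congr rfl fun i _ => ?_
  refine Finset.sum_congr rfl fun j _ => ?_
  refine Finset.sum_congr rfl fun k _ => ?_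
  refine Finset.sum_congr rfl fun l _ => ?_
  ring

lemma dot_pow_two (w y : Fin d → ℝ) :
    dotProduct y w ^ 2 =
      ∑ i : Fin d, ∑ j : Fin d, (y i * y j) * (w i * w j) := by
  have h : dotProduct y w ^ 2 = (∑ i, y i * w i) * (∑ i, y i * w i) := by
    rw [dotProduct]; ring
  rw [h, Finset.sum_mul_sum]
  refine Finset.sum_congr rfl fun i _ => Finset.sum_congr rfl fun j _ => by ring

lemma integrable_dot_pow_four (h4 : Integrable (fun z => vnorm d z ^ 4) ρ) (w : Fin d → ℝ) :
    Integrable (fun y => dotProduct y w ^ 4) ρ := by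
  have : (fun y : Fin d → ℝ => dotProduct y w ^ 4) =
      fun y => ∑ i : Fin d, ∑ j : Fin d, ∑ k : Fin d, ∑ l : Fin d,
        (y i * y j * y k * y l) * (w i * w j * w k * w l) := by
    funext y; exact dot_pow_four w y
  rw [this]
  exact integrable_finset_sum _ fun i _ => integrable_finset_sum _ fun j _ =>
    integrable_finset_sum _ fun k _ => integrable_finset_sum _ fun l _ =>
      (integrable_quad h4 i j k l).mul_const _

lemma integrable_dot_pow_two (h4 : Integrable (fun z => vnorm d z ^ 4) ρ) (w : Fin d → ℝ) :
    Integrable (fun y => dotProduct y w ^ 2) ρ := by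
  have : (fun y : Fin d → ℝ => dotProduct y w ^ 2) =
      fun y => ∑ i : Fin d, ∑ j : Fin d, (y i * y j) * (w i * w j) := by
    funext y; exact dot_pow_two w y
  rw [this]
  exact integrable_finset_sum _ fun i _ => integrable_finset_sum _ fun j _ =>
    (integrable_pair h4 i j).mul_const _

lemma integral_dot_pow_four (h4 : Integrable (fun z => vnorm d z ^ 4) ρ) (w : Fin d → ℝ) :
    ∫ y, dotProduct y w ^ 4 ∂ρ = M4 d ρ w := by
  simp_rw [dot_pow_four w]
  rw [M4]
  rw [integral_finset_sum _ fun i _ => integrable_finset_sum _ fun j _ =>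
    integrable_finset_sum _ fun k _ => integrable_finset_sum _ fun l _ =>
      (integrable_quad h4 i j k l).mul_const _]
  refine Finset.sum_congr rfl fun i _ => ?_
  rw [integral_finset_sum _ fun j _ => integrable_finset_sum _ fun k _ =>
    integrable_finset_sum _ fun l _ => (integrable_quad h4 i j k l).mul_const _]
  refine Finset.sum_congr rfl fun j _ => ?_
  rw [integral_finset_sum _ fun k _ => integrable_finset_sum _ fun l _ =>
    (integrable_quad h4 i j k l).mul_const _]
  refine Finset.sum_congr rfl fun k _ => ?_
  rw [integral_finset_sum _ fun l _ => (integrable_quad h4 i j k l).mul_const _]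
  refine Finset.sum_congr rfl fun l _ => ?_
  rw [integral_mul_const]

lemma integral_dot_pow_two (h4 : Integrable (fun z => vnorm d z ^ 4) ρ) (w : Fin d → ℝ) :
    ∫ y, dotProduct y w ^ 2 ∂ρ = dotProduct ((covM d ρ).mulVec w) w := by
  simp_rw [dot_pow_two w]
  rw [integral_finset_sum _ fun i _ => integrable_finset_sum _ fun j _ =>
    (integrable_pair h4 i j).mul_const _]
  rw [dotProduct]
  refine Finset.sum_congr rfl fun i _ => ?_
  rw [integral_finset_sum _ fun j _ => (integrable_pair h4 i j).mul_const _]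
  rw [Matrix.mulVec, dotProduct, Finset.sum_mul]
  refine Finset.sum_congr rfl fun j _ => ?_
  rw [integral_mul_const, covM]
  simp only [Matrix.of_apply]
  ring

lemma cauchy_schwarz_pow (h4 : Integrable (fun z => vnorm d z ^ 4) ρ) (w : Fin d → ℝ) :
    (∫ y, dotProduct y w ^ 2 ∂ρ) ^ 2 ≤ ∫ y, dotProduct y w ^ 4 ∂ρ := by
  set c := ∫ y, dotProduct y w ^ 2 ∂ρ with hc
  have hf2 := integrable_dot_pow_two h4 w
  have hf4 := integrable_dot_pow_four h4 w
  have key : 0 ≤ ∫ y, (dotProduct y w ^ 2 - c) ^ 2 ∂ρ :=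
    integral_nonneg fun y => sq_nonneg _
  have hexp : ∀ y : Fin d → ℝ, (dotProduct y w ^ 2 - c) ^ 2 =
      dotProduct y w ^ 4 - (2 * c) * dotProduct y w ^ 2 + c ^ 2 := by
    intro y; ring
  have hmul : Integrable (fun y => (2 * c) * dotProduct y w ^ 2) ρ :=
    hf2.const_mul _
  have hsub : Integrable
      (fun y => dotProduct y w ^ 4 - (2 * c) * dotProduct y w ^ 2) ρ := by
    have h := hf4.sub hmul
    exact h
  rw [show (fun y : Fin d → ℝ => (dotProduct y w ^ 2 - c) ^ 2) =
      fun y => (dotProduct y w ^ 4 - (2 * c) * dotProduct y w ^ 2) + c ^ 2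
      from funext hexp] at key
  rw [integral_add hsub (integrable_const _), integral_sub hf4 hmul,
    integral_const_mul, integral_const] at key
  simp only [probReal_univ, one_smul] at key
  nlinarith

lemma covM_posDef (h4 : Integrable (fun z => vnorm d z ^ 4) ρ) (hnd : NonDeg d ρ) :
    (covM d ρ).PosDef := by
  refine posDef_iff_dotProduct_mulVec.mpr ⟨?_, ?_⟩
  · ext i j
    simp only [covM, Matrix.conjTranspose_apply, Matrix.of_apply, star_trivial]
    simp_rw [mul_comm]
  · intro x hx
    have hstar : (star x : Fin d → ℝ) = x := by
      funext i; simp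
    rw [hstar, dotProduct_comm, ← integral_dot_pow_two h4 x]
    have hnonneg : 0 ≤ ∫ y, dotProduct y x ^ 2 ∂ρ :=
      integral_nonneg fun y => sq_nonneg _
    rcases hnonneg.lt_or_eq with h | h
    · exact h
    · exfalso
      have hzero : (fun y : Fin d → ℝ => dotProduct y x ^ 2) =ᵐ[ρ] 0 := by
        rw [← integral_eq_zero_iff_of_nonneg (fun y => sq_nonneg _)
          (integrable_dot_pow_two h4 x)]
        exact h.symm
      have hcompl : ρ {z | dotProduct x z = 0}ᶜ = 0 := by
        refine measure_mono_null ?_ hzero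
        intro z hz
        simp only [Set.mem_compl_iff, Set.mem_setOf_eq] at hz
        simp only [Set.mem_setOf_eq, Pi.zero_apply]
        intro hz2
        exact hz (by rw [dotProduct_comm]; exact pow_eq_zero_iff (n := 2) (by norm_num) |>.mp hz2)
      have h1 : (1 : ENNReal) ≤ ρ {z | dotProduct x z = 0} := by
        have := measure_union_le (μ := ρ) {z | dotProduct x z = 0}
          {z | dotProduct x z = 0}ᶜ
        rw [Set.union_compl_self, measure_univ, hcompl, add_zero] at this
        exact this
      exact absurd (hnd x hx 0) (not_lt.mpr h1)

end helpers

/-- `z ↦ exp(-M₄(Σ^{-1/2}z)/12)` is Lebesgue-integrable on `ℝ^d`. -/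
theorem exp_neg_M4_integrable
    (d : ℕ) (hd : 1 ≤ d) (ρ : Measure (Fin d → ℝ)) [IsProbabilityMeasure ρ]
    (hsym : SymMeas d ρ) (hnd : NonDeg d ρ)
    (h4 : Integrable (fun z => vnorm d z ^ 4) ρ) :
    Integrable (fun z : Fin d → ℝ =>
      Real.exp (-(M4 d ρ ((psqrt d (covM d ρ))⁻¹.mulVec z)) / 12)) volume := by
  classical
  have hP : (covM d ρ).PosDef := covM_posDef h4 hnd
  set S := covM d ρ with hS
  set Q := psqrt d S with hQdef
  have hQ : Q = (hP.posSemidef.1.eigenvectorUnitary : Matrix (Fin d) (Fin d) ℝ) *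
      Matrix.diagonal (fun i => Real.sqrt (hP.posSemidef.1.eigenvalues i)) *
      (star hP.posSemidef.1.eigenvectorUnitary : Matrix (Fin d) (Fin d) ℝ) := by
    rw [hQdef, psqrt, dif_pos hP.posSemidef]
  have hQQ : Q * Q = S := by
    rw [hQ]
    have hU : (star hP.posSemidef.1.eigenvectorUnitary : Matrix (Fin d) (Fin d) ℝ) *
        (hP.posSemidef.1.eigenvectorUnitary : Matrix (Fin d) (Fin d) ℝ) = 1 :=
      Unitary.coe_star_mul_self _
    have hD : Matrix.diagonal (fun i => Real.sqrt (hP.posSemidef.1.eigenvalues i)) *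
        Matrix.diagonal (fun i => Real.sqrt (hP.posSemidef.1.eigenvalues i)) =
        Matrix.diagonal (RCLike.ofReal ∘ hP.posSemidef.1.eigenvalues) := by
      rw [Matrix.diagonal_mul_diagonal]
      congr 1
      funext i
      simp [Real.mul_self_sqrt (hP.posSemidef.eigenvalues_nonneg i)]
    conv_rhs => rw [hP.posSemidef.1.spectral_theorem, Unitary.conjStarAlgAut_apply]
    rw [← hD]
    simp only [mul_assoc]
    rw [← mul_assoc (star _ : Matrix (Fin d) (Fin d) ℝ) _ _, hU, one_mul]
  have hdetS : 0 < S.det := hP.det_pos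
  have hdetQ : IsUnit Q.det := by
    rw [isUnit_iff_ne_zero]
    intro h
    rw [← hQQ, Matrix.det_mul, h, mul_zero] at hdetS
    exact lt_irrefl _ hdetS
  set B := Q⁻¹ with hBdef
  have hQherm : Q.IsHermitian := by
    rw [hQ]
    simp [Matrix.IsHermitian, Matrix.conjTranspose_mul, Matrix.star_eq_conjTranspose,
      Matrix.diagonal_conjTranspose, mul_assoc]
  have hBsymm : Bᵀ = B := by
    have hB : B.IsHermitian := hQherm.inv
    ext i j
    rw [Matrix.transpose_apply]
    have := hB.apply i j
    simpa using this
  have hBSB : B * S * B = 1 := by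
    rw [← hQQ, hBdef]
    calc Q⁻¹ * (Q * Q) * Q⁻¹ = (Q⁻¹ * Q) * (Q * Q⁻¹) := by simp only [mul_assoc]
    _ = 1 := by rw [Matrix.nonsing_inv_mul Q hdetQ, Matrix.mul_nonsing_inv Q hdetQ, one_mul]
  have hSsymm : Sᵀ = S := by
    ext i j
    have := hP.1.apply i j
    simpa using this
  have hmat : (S * B)ᵀ * B = 1 := by
    rw [Matrix.transpose_mul, hBsymm, hSsymm]
    exact hBSB
  have hkey : ∀ z : Fin d → ℝ,
      dotProduct (S.mulVec (B.mulVec z)) (B.mulVec z) = dotProduct z z := by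
    intro z
    rw [Matrix.mulVec_mulVec, dotProduct_comm, dotProduct_mulVec,
      ← Matrix.mulVec_transpose]
    rw [Matrix.mulVec_mulVec, hmat, Matrix.one_mulVec]
  have hM4 : ∀ z : Fin d → ℝ,
      (dotProduct z z) ^ 2 ≤ M4 d ρ (B.mulVec z) := by
    intro z
    have h1 := cauchy_schwarz_pow h4 (B.mulVec z)
    rw [integral_dot_pow_four h4, integral_dot_pow_two h4] at h1
    rw [← hS, hkey z] at h1
    exact h1
  have hcont : Continuous fun z : Fin d → ℝ => M4 d ρ (B.mulVec z) := by
    unfold M4 Matrix.mulVec dotProduct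
    fun_prop
  have hg : Integrable (fun z : Fin d → ℝ =>
      Real.exp 3 * Real.exp (-(dotProduct z z))) volume := by
    have hprod : (fun z : Fin d → ℝ => Real.exp (-(dotProduct z z))) =
        fun z => ∏ i, Real.exp (-(z i * z i)) := by
      funext z
      rw [← Real.exp_sum, dotProduct, ← Finset.sum_neg_distrib]
    have h1 : Integrable (fun t : ℝ => Real.exp (-(t * t))) volume := by
      have := integrable_exp_neg_mul_sq (b := 1) one_pos
      simpa [sq] using this
    have h2 := Integrable.fintype_prod (ι := Fin d) (f := fun _ (t : ℝ) => Real.exp (-(t * t)))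
      fun _ => h1
    have h3 : Integrable (fun z : Fin d → ℝ => Real.exp (-(dotProduct z z))) volume := by
      rw [hprod]; exact h2
    exact h3.const_mul _
  refine hg.mono (Continuous.aestronglyMeasurable (by fun_prop)) ?_
  refine Filter.Eventually.of_forall fun z => ?_
  have ht : 0 ≤ dotProduct z z := Finset.sum_nonneg fun i _ => mul_self_nonneg _
  set t := dotProduct z z with htdef
  have hle : -(M4 d ρ (B.mulVec z)) / 12 ≤ 3 - t := by
    have := hM4 z
    nlinarith [sq_nonneg (t - 6)]
  have h2 : Real.exp (-(M4 d ρ (B.mulVec z)) / 12) ≤ Real.exp 3 * Real.exp (-t) := by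
    rw [← Real.exp_add]
    exact Real.exp_le_exp.mpr (by linarith)
  rw [Real.norm_eq_abs, Real.abs_exp, Real.norm_eq_abs,
    abs_of_pos (by positivity)]
  exact h2
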